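/- Let a, b, c ∈ ℝ and λ > 0 with a < 0, b < 0 and c > 1. Then the discrete-time Hawkes chain with memory 3 and parameters (a,b,c,λ), started at (0,0,0), never returns to (0,0,0) with positive probability: denoting by P_{(0,0,0)} the trajectory law of the chain started at X₀ = (0,0,0), one has P_{(0,0,0)}(X_n ≠ (0,0,0) for all n ≥ 1) > 0; in particular the chain is transient. -/

import Mathlib

open scoped BigOperators
open Classical MeasureTheory

/-- The Poisson probability mass function with parameter `s` at `k`. -/
noncomputable def poissonPMF (s : ℝ) (k : ℕ) : ℝ :=
  Real.exp (-s) * s ^ k / (Nat.factorial k)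

/-- The (truncated) intensity `s_{ijk} = max(ai + bj + ck + λ, 0)`. -/
noncomputable def s3 (a b c lam : ℝ) (x : ℕ × ℕ × ℕ) : ℝ :=
  max (a * x.1 + b * x.2.1 + c * x.2.2 + lam) 0

/-- Transition kernel of the discrete-time Hawkes chain with memory `3`. -/
noncomputable def hawkes3P (a b c lam : ℝ) (x y : ℕ × ℕ × ℕ) : ℝ :=
  if y.2.1 = x.1 ∧ y.2.2 = x.2.1 then poissonPMF (s3 a b c lam x) y.1 else 0

namespace H3aux


lemma pmf_nonneg {s : ℝ} (hs : 0 ≤ s) (k : ℕ) : 0 ≤ poissonPMF s k := by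
  unfold poissonPMF; positivity

lemma pmf_eq (s : ℝ) (k : ℕ) :
    poissonPMF s k = Real.exp (-s) * (s ^ k / k.factorial) := by
  unfold poissonPMF; ring

lemma summable_g (s : ℝ) : Summable (fun k : ℕ => s ^ k / k.factorial) :=
  Real.summable_pow_div_factorial s

lemma tsum_g (s : ℝ) : ∑' k : ℕ, s ^ k / (k.factorial : ℝ) = Real.exp s := by
  rw [Real.exp_eq_exp_ℝ, NormedSpace.exp_eq_tsum_div]

lemma pmf_funext (s : ℝ) : poissonPMF s = fun k => Real.exp (-s) * (s ^ k / k.factorial) :=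
  funext (pmf_eq s)

lemma summable_pmf (s : ℝ) : Summable (poissonPMF s) := by
  rw [pmf_funext]
  exact (summable_g s).mul_left _

lemma tsum_pmf (s : ℝ) : ∑' k : ℕ, poissonPMF s k = 1 := by
  rw [pmf_funext]
  rw [tsum_mul_left, tsum_g, ← Real.exp_add]
  simp

lemma g_succ (s : ℝ) (k : ℕ) :
    ((k:ℝ) + 1) * (s ^ (k+1) / (k+1).factorial) = s * (s ^ k / k.factorial) := by
  have h1 : ((k+1).factorial : ℝ) = ((k:ℝ)+1) * k.factorial := by
    rw [Nat.factorial_succ]; push_cast; ring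
  have h2 : ((k:ℝ)+1) ≠ 0 := by positivity
  have h3 : (k.factorial : ℝ) ≠ 0 := by exact_mod_cast k.factorial_ne_zero
  rw [h1]; field_simp
  ring

lemma summable_f1 (s : ℝ) : Summable (fun k : ℕ => (k:ℝ) * (s ^ k / k.factorial)) := by
  rw [← summable_nat_add_iff 1]
  have : (fun k : ℕ => ((k+1:ℕ):ℝ) * (s ^ (k+1) / (k+1).factorial))
      = fun k : ℕ => s * (s ^ k / k.factorial) := by
    funext k; push_cast; exact g_succ s k
  rw [this]
  exact (summable_g s).mul_left _

lemma tsum_f1 (s : ℝ) : ∑' k : ℕ, (k:ℝ) * (s ^ k / k.factorial) = s * Real.exp s := by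
  rw [Summable.tsum_eq_zero_add (summable_f1 s)]
  have : (fun k : ℕ => ((k+1:ℕ):ℝ) * (s ^ (k+1) / (k+1).factorial))
      = fun k : ℕ => s * (s ^ k / k.factorial) := by
    funext k; push_cast; exact g_succ s k
  simp only [this]
  rw [tsum_mul_left, tsum_g]
  simp

lemma f2_succ (s : ℝ) (k : ℕ) :
    ((k:ℝ) + 2) * ((k:ℝ) + 1) * (s ^ (k+2) / (k+2).factorial) = s^2 * (s ^ k / k.factorial) := by
  have h1 : ((k+2).factorial : ℝ) = ((k:ℝ)+2) * (((k:ℝ)+1) * k.factorial) := by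
    rw [show k+2 = (k+1)+1 from rfl, Nat.factorial_succ, Nat.factorial_succ]; push_cast; ring
  have h3 : (k.factorial : ℝ) ≠ 0 := by exact_mod_cast k.factorial_ne_zero
  have h2 : ((k:ℝ)+1) ≠ 0 := by positivity
  have h4 : ((k:ℝ)+2) ≠ 0 := by positivity
  rw [h1]; field_simp
  ring

lemma summable_f2 (s : ℝ) :
    Summable (fun k : ℕ => (k:ℝ) * ((k:ℝ) - 1) * (s ^ k / k.factorial)) := by
  rw [← summable_nat_add_iff 2]
  have : (fun k : ℕ => ((k+2:ℕ):ℝ) * (((k+2:ℕ):ℝ) - 1) * (s ^ (k+2) / (k+2).factorial))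
      = fun k : ℕ => s^2 * (s ^ k / k.factorial) := by
    funext k; push_cast
    rw [show ((k:ℝ) + 2 - 1) = (k:ℝ) + 1 by ring]
    exact f2_succ s k
  rw [this]
  exact (summable_g s).mul_left _

lemma tsum_f2 (s : ℝ) :
    ∑' k : ℕ, (k:ℝ) * ((k:ℝ) - 1) * (s ^ k / k.factorial) = s^2 * Real.exp s := by
  rw [Summable.tsum_eq_zero_add (summable_f2 s)]
  rw [Summable.tsum_eq_zero_add ((summable_nat_add_iff 1).2 (summable_f2 s))]
  have : (fun k : ℕ => ((k+1+1:ℕ):ℝ) * (((k+1+1:ℕ):ℝ) - 1) * (s ^ (k+1+1) / (k+1+1).factorial))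
      = fun k : ℕ => s^2 * (s ^ k / k.factorial) := by
    funext k; push_cast
    rw [show ((k:ℝ) + 1 + 1 - 1) = (k:ℝ) + 1 by ring, show ((k:ℝ) + 1 + 1) = (k:ℝ) + 2 by ring,
      show k+1+1 = k+2 from rfl]
    exact f2_succ s k
  simp only [this]
  rw [tsum_mul_left, tsum_g]
  simp

lemma summable_var (s : ℝ) :
    Summable (fun k : ℕ => ((k:ℝ) - s)^2 * poissonPMF s k) := by
  have : (fun k : ℕ => ((k:ℝ) - s)^2 * poissonPMF s k)
      = fun k : ℕ => Real.exp (-s) *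
          ((k:ℝ) * ((k:ℝ) - 1) * (s ^ k / k.factorial)
            + (1 - 2*s) * ((k:ℝ) * (s ^ k / k.factorial))
            + s^2 * (s ^ k / k.factorial)) := by
    funext k; rw [pmf_eq]; ring
  rw [this]
  exact (((summable_f2 s).add ((summable_f1 s).mul_left _)).add
    ((summable_g s).mul_left _)).mul_left _

lemma tsum_var {s : ℝ} (hs : 0 ≤ s) :
    ∑' k : ℕ, ((k:ℝ) - s)^2 * poissonPMF s k = s := by
  have heq : (fun k : ℕ => ((k:ℝ) - s)^2 * poissonPMF s k)
      = fun k : ℕ => Real.exp (-s) *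
          ((k:ℝ) * ((k:ℝ) - 1) * (s ^ k / k.factorial)
            + (1 - 2*s) * ((k:ℝ) * (s ^ k / k.factorial))
            + s^2 * (s ^ k / k.factorial)) := by
    funext k; rw [pmf_eq]; ring
  rw [heq, tsum_mul_left, Summable.tsum_add, Summable.tsum_add, tsum_mul_left, tsum_mul_left,
    tsum_f2, tsum_f1, tsum_g]
  · have h : Real.exp (-s) * Real.exp s = 1 := by rw [← Real.exp_add]; simp
    linear_combination s * h
  · exact summable_f2 s
  · exact (summable_f1 s).mul_left _
  · exact (summable_f2 s).add ((summable_f1 s).mul_left _)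
  · exact (summable_g s).mul_left _

/-- Chebyshev-type lower bound for Poisson mass on a window. -/
lemma poisson_window {s t : ℝ} (hs : 0 < s) (ht : 0 < t) (A : Set ℕ)
    (hA : ∀ k : ℕ, |(k:ℝ) - s| ≤ t → k ∈ A) :
    1 - s / t^2 ≤ ∑' k : A, poissonPMF s (k : ℕ) := by
  have hp := pmf_nonneg hs.le
  have hsump := summable_pmf s
  rw [tsum_subtype]
  have hindsum : Summable (A.indicator (poissonPMF s)) :=
    hsump.indicator A
  set fin : ℕ → ℝ := fun k => if |(k:ℝ) - s| ≤ t then poissonPMF s k else 0 with hfin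
  set fout : ℕ → ℝ := fun k => if |(k:ℝ) - s| ≤ t then 0 else poissonPMF s k with hfout
  have hsumin : Summable fin := by
    apply Summable.of_nonneg_of_le (g := fin) _ _ hsump
    · intro k; simp only [hfin]; split
      · exact hp k
      · exact le_rfl
    · intro k; simp only [hfin]; split
      · exact le_rfl
      · exact hp k
  have hsumout : Summable fout := by
    apply Summable.of_nonneg_of_le (g := fout) _ _ hsump
    · intro k; simp only [hfout]; split
      · exact le_rfl
      · exact hp k
    · intro k; simp only [hfout]; split
      · exact hp k
      · exact le_rfl
  have hsplit : ∑' k, fin k + ∑' k, fout k = 1 := by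
    rw [← Summable.tsum_add hsumin hsumout, ← tsum_pmf s]
    congr 1; funext k; simp only [hfin, hfout]; split <;> simp
  have hout : ∑' k, fout k ≤ s / t^2 := by
    have hle : ∀ k : ℕ, fout k ≤ (((k:ℝ) - s)^2 / t^2) * poissonPMF s k := by
      intro k; simp only [hfout]; split
      · exact mul_nonneg (by positivity) (hp k)
      · rename_i h
        push_neg at h
        have h2 : t^2 ≤ ((k:ℝ) - s)^2 := by
          have := abs_nonneg ((k:ℝ) - s)
          nlinarith [sq_abs ((k:ℝ) - s)]
        have := hp k
        rw [div_mul_eq_mul_div, le_div_iff₀ (by positivity)]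
        nlinarith
    have hs2 : Summable (fun k : ℕ => (((k:ℝ) - s)^2 / t^2) * poissonPMF s k) := by
      have : (fun k : ℕ => (((k:ℝ) - s)^2 / t^2) * poissonPMF s k)
          = fun k : ℕ => (1/t^2) * (((k:ℝ) - s)^2 * poissonPMF s k) := by
        funext k; ring
      rw [this]; exact (summable_var s).mul_left _
    calc ∑' k, fout k ≤ ∑' k : ℕ, (((k:ℝ) - s)^2 / t^2) * poissonPMF s k :=
          Summable.tsum_le_tsum hle hsumout hs2
      _ = (1/t^2) * ∑' k : ℕ, ((k:ℝ) - s)^2 * poissonPMF s k := by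
          rw [← tsum_mul_left]; congr 1; funext k; ring
      _ = s / t^2 := by rw [tsum_var hs.le]; ring
  have hin : fin ≤ A.indicator (poissonPMF s) := by
    intro k; simp only [hfin]
    split
    · rename_i h
      rw [Set.indicator_of_mem (hA k h)]
    · exact Set.indicator_nonneg (fun j _ => hp j) k
  calc 1 - s / t^2 ≤ ∑' k, fin k := by linarith
    _ ≤ ∑' k, A.indicator (poissonPMF s) k := Summable.tsum_le_tsum hin hsumin hindsum

lemma pmf_le_one {s : ℝ} (hs : 0 ≤ s) (k : ℕ) : poissonPMF s k ≤ 1 := by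
  have := Summable.sum_le_tsum {k} (fun j _ => pmf_nonneg hs j) (summable_pmf s)
  rw [tsum_pmf s] at this
  simpa using this

lemma pmf_zero_zero : poissonPMF 0 0 = 1 := by
  unfold poissonPMF; simp

lemma pmf_pos {s : ℝ} (hs : 0 < s) (k : ℕ) : 0 < poissonPMF s k := by
  unfold poissonPMF; positivity



noncomputable def eps (c : ℝ) : ℝ := (c - 1) / (2 * c)

noncomputable def Lb (c lam : ℝ) (m : ℕ) : ℕ → ℝ
  | 0 => m
  | k + 1 => (1 - eps c) * (c * Lb c lam m k + lam)

noncomputable def Ub (c lam : ℝ) (m : ℕ) : ℕ → ℝ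
  | 0 => m
  | k + 1 => (1 + eps c) * (c * Ub c lam m k + lam)

def W (c lam : ℝ) (m k : ℕ) : Set ℕ :=
  {y | Lb c lam m k ≤ (y : ℝ) ∧ (y : ℝ) ≤ Ub c lam m k}

def Cset (c lam : ℝ) (m : ℕ) (n : ℕ) : Set (ℕ × ℕ × ℕ) :=
  if n = 0 then {(0,0,0)}
  else if (n-1) % 3 = 0 then {p | p.1 ∈ W c lam m ((n-1)/3) ∧ p.2.1 = 0 ∧ p.2.2 = 0}
  else if (n-1) % 3 = 1 then {p | p.1 = 0 ∧ p.2.1 ∈ W c lam m ((n-1)/3) ∧ p.2.2 = 0}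
  else {p | p.1 = 0 ∧ p.2.1 = 0 ∧ p.2.2 ∈ W c lam m ((n-1)/3)}

noncomputable def err (c lam : ℝ) (m k : ℕ) : ℝ := 1 / ((eps c)^2 * c * Lb c lam m k)

noncomputable def q (c lam : ℝ) (m : ℕ) (j : ℕ) : ℝ :=
  if j ≤ 1 then poissonPMF lam m
  else if j % 3 = 1 ∧ 4 ≤ j then 1 - err c lam m ((j-4)/3) else 1

noncomputable def dd (c lam : ℝ) (m : ℕ) (j : ℕ) : ℝ :=
  if j % 3 = 1 ∧ 4 ≤ j then err c lam m ((j-4)/3) else 0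

section facts
variable {a b c lam : ℝ} {m : ℕ}

lemma eps_pos (hc : 1 < c) : 0 < eps c := by
  unfold eps; apply div_pos <;> linarith

lemma eps_lt_one (hc : 1 < c) : eps c < 1 := by
  unfold eps; rw [div_lt_one (by linarith)]; linarith

lemma one_sub_eps_mul (hc : 1 < c) : (1 - eps c) * c = (c + 1) / 2 := by
  unfold eps
  have : (2:ℝ) * c ≠ 0 := by positivity
  field_simp
  ring

lemma one_sub_eps_pos (hc : 1 < c) : 0 < 1 - eps c := by linarith [eps_lt_one hc]

lemma Lb_ge (hc : 1 < c) (hlam : 0 < lam) :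
    ∀ k, (m:ℝ) * ((c+1)/2)^k ≤ Lb c lam m k := by
  intro k
  induction k with
  | zero => simp [Lb]
  | succ k ih =>
    have h1 := one_sub_eps_pos hc
    have hcpos : (0:ℝ) < c := by linarith
    have hmk : (0:ℝ) ≤ (m:ℝ) * ((c+1)/2)^k := by positivity
    have h2 : (1 - eps c) * (c * Lb c lam m k) ≤ (1 - eps c) * (c * Lb c lam m k + lam) := by
      nlinarith
    have h3 : (1 - eps c) * c * ((m:ℝ) * ((c+1)/2)^k) ≤ (1 - eps c) * c * Lb c lam m k :=
      mul_le_mul_of_nonneg_left ih (by positivity)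
    calc (m:ℝ) * ((c+1)/2)^(k+1) = (1 - eps c) * c * ((m:ℝ) * ((c+1)/2)^k) := by
          rw [one_sub_eps_mul hc]; ring
      _ ≤ (1 - eps c) * (c * Lb c lam m k) := by linarith
      _ ≤ Lb c lam m (k+1) := by rw [Lb]; linarith

lemma Lb_ge_m (hc : 1 < c) (hlam : 0 < lam) : ∀ k, (m:ℝ) ≤ Lb c lam m k := by
  intro k
  have h1 : (1:ℝ) ≤ ((c+1)/2)^k := by
    induction k with
    | zero => simp
    | succ k ih =>
      rw [pow_succ]
      nlinarith
  have h2 := Lb_ge (lam := lam) (m := m) hc hlam k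
  have hm0 : (0:ℝ) ≤ (m:ℝ) := Nat.cast_nonneg m
  nlinarith [mul_le_mul_of_nonneg_left h1 hm0]

lemma Lb_pos (hc : 1 < c) (hlam : 0 < lam) (hm : 1 ≤ (m:ℝ)) : ∀ k, 0 < Lb c lam m k :=
  fun k => lt_of_lt_of_le (by linarith) (Lb_ge_m hc hlam k)

lemma Lb_le_Ub (hc : 1 < c) (hlam : 0 < lam) (hm : 1 ≤ (m:ℝ)) :
    ∀ k, Lb c lam m k ≤ Ub c lam m k := by
  intro k
  induction k with
  | zero => simp [Lb, Ub]
  | succ k ih =>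
    rw [Lb, Ub]
    have h1 := one_sub_eps_pos hc
    have h2 := eps_pos hc
    have hcpos : (0:ℝ) < c := by linarith
    have hLpos := Lb_pos (lam := lam) (m := m) hc hlam hm k
    have h3 : c * Lb c lam m k + lam ≤ c * Ub c lam m k + lam := by
      have := mul_le_mul_of_nonneg_left ih hcpos.le
      linarith
    have h4 : (0:ℝ) ≤ c * Lb c lam m k + lam := by positivity
    exact mul_le_mul (by linarith) h3 h4 (by linarith)

lemma err_nonneg (hc : 1 < c) (hlam : 0 < lam) (hm : 1 ≤ (m:ℝ)) {k : ℕ} :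
    0 ≤ err c lam m k := by
  unfold err
  have h1 := Lb_pos (lam := lam) (m := m) hc hlam hm k
  have h2 := eps_pos hc
  positivity

lemma err_le (hc : 1 < c) (hlam : 0 < lam) (hm : 1 ≤ (m:ℝ)) (k : ℕ) :
    err c lam m k ≤ 1 / ((eps c)^2 * c * m) * (2/(c+1))^k := by
  have hεpos := eps_pos hc
  have hcpos : (0:ℝ) < c := by linarith
  have hmpos : (0:ℝ) < m := by linarith
  have hLb := Lb_ge (lam := lam) (m := m) hc hlam k
  have hden : (0:ℝ) < (eps c)^2 * c * ((m:ℝ) * ((c+1)/2)^k) := by positivity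
  have h1 : err c lam m k ≤ 1 / ((eps c)^2 * c * ((m:ℝ) * ((c+1)/2)^k)) := by
    unfold err
    apply one_div_le_one_div_of_le hden
    exact mul_le_mul_of_nonneg_left hLb (by positivity)
  have h2 : 1 / ((eps c)^2 * c * ((m:ℝ) * ((c+1)/2)^k))
      = 1 / ((eps c)^2 * c * m) * (2/(c+1))^k := by
    have hp : ((c+1)/2)^k > 0 := by positivity
    have hq : (2/(c+1))^k > 0 := by positivity
    have hmul : ((c+1)/2)^k * (2/(c+1))^k = 1 := by
      rw [← mul_pow]
      have : (c+1)/2 * (2/(c+1)) = 1 := by field_simp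
      rw [this, one_pow]
    field_simp
    nlinarith [hmul]
  linarith [h1, h2.le, h2.ge]

lemma sum_err_le (hc : 1 < c) (hlam : 0 < lam) (hm : 1 ≤ (m:ℝ)) (K : ℕ) :
    ∑ k ∈ Finset.range K, err c lam m k ≤ 1 / ((eps c)^2 * c * m) * (1 - 2/(c+1))⁻¹ := by
  have hεpos := eps_pos hc
  have hcpos : (0:ℝ) < c := by linarith
  have hmpos : (0:ℝ) < m := by linarith
  have hx0 : (0:ℝ) ≤ 2/(c+1) := by positivity
  have hx1 : 2/(c+1) < 1 := by rw [div_lt_one (by linarith)]; linarith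
  have hD : (0:ℝ) ≤ 1 / ((eps c)^2 * c * m) := by positivity
  calc ∑ k ∈ Finset.range K, err c lam m k
      ≤ ∑ k ∈ Finset.range K, 1 / ((eps c)^2 * c * m) * (2/(c+1))^k :=
        Finset.sum_le_sum (fun k _ => err_le hc hlam hm k)
    _ = 1 / ((eps c)^2 * c * m) * ∑ k ∈ Finset.range K, (2/(c+1))^k := by
        rw [Finset.mul_sum]
    _ ≤ 1 / ((eps c)^2 * c * m) * ∑' k : ℕ, (2/(c+1))^k := by
        apply mul_le_mul_of_nonneg_left _ hD
        exact Summable.sum_le_tsum _ (fun k _ => by positivity) (summable_geometric_of_lt_one hx0 hx1)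
    _ = 1 / ((eps c)^2 * c * m) * (1 - 2/(c+1))⁻¹ := by
        rw [tsum_geometric_of_lt_one hx0 hx1]

/-- Chebyshev applied to the window step. -/
lemma window_step (hc : 1 < c) (hlam : 0 < lam) (hm : 1 ≤ (m:ℝ)) (k : ℕ) (y : ℕ)
    (hy : y ∈ W c lam m k) :
    1 - err c lam m k ≤ ∑' ℓ : (W c lam m (k+1)), poissonPMF (c * y + lam) (ℓ : ℕ) := by
  have hεpos := eps_pos hc
  have hcpos : (0:ℝ) < c := by linarith
  obtain ⟨hy1, hy2⟩ := hy
  have hLpos := Lb_pos (lam := lam) (m := m) hc hlam hm k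
  have hs : 0 < c * y + lam := by nlinarith
  have ht : 0 < eps c * (c * y + lam) := by positivity
  have hA : ∀ ℓ : ℕ, |(ℓ:ℝ) - (c * y + lam)| ≤ eps c * (c * y + lam) → ℓ ∈ W c lam m (k+1) := by
    intro ℓ hℓ
    rw [abs_le] at hℓ
    constructor
    · rw [Lb]
      have h1 : c * Lb c lam m k + lam ≤ c * y + lam := by nlinarith
      have h2 := one_sub_eps_pos hc
      nlinarith
    · rw [Ub]
      have h1 : c * y + lam ≤ c * Ub c lam m k + lam := by
        have := Lb_le_Ub (lam := lam) (m := m) hc hlam hm k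
        nlinarith
      nlinarith
  have hcheb := poisson_window hs ht _ hA
  have hbound : 1 - err c lam m k ≤ 1 - (c * y + lam) / (eps c * (c * y + lam))^2 := by
    have hid : (c * y + lam) / (eps c * (c * y + lam))^2 = 1 / ((eps c)^2 * (c * y + lam)) := by
      field_simp
    rw [hid]
    have : 1 / ((eps c)^2 * (c * y + lam)) ≤ err c lam m k := by
      unfold err
      apply one_div_le_one_div_of_le (by positivity)
      have h5 : c * Lb c lam m k ≤ c * (y:ℝ) + lam := by nlinarith
      calc (eps c)^2 * c * Lb c lam m k = (eps c)^2 * (c * Lb c lam m k) := by ring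
        _ ≤ (eps c)^2 * (c * (y:ℝ) + lam) := mul_le_mul_of_nonneg_left h5 (by positivity)
    linarith
  exact le_trans hbound hcheb


lemma hawkes3P_nonneg (ha' : a < 0) (hb' : b < 0) (x y : ℕ × ℕ × ℕ) :
    0 ≤ hawkes3P a b c lam x y := by
  unfold hawkes3P
  split
  · exact pmf_nonneg (le_max_right _ _) _
  · exact le_rfl

/-- the key one-step lower bound -/
lemma step_bound (hc : 1 < c) (hlam : 0 < lam) (hm : 1 ≤ (m:ℝ))
    (ha' : a < 0) (hb' : b < 0)
    (hma : a * m + lam ≤ 0) (hmb : b * m + lam ≤ 0)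
    (n : ℕ) (x : ℕ × ℕ × ℕ) (hx : x ∈ Cset c lam m n) :
    ENNReal.ofReal (q c lam m (n+1)) ≤
      ∑' y : (Cset c lam m (n+1)), ENNReal.ofReal (hawkes3P a b c lam x y) := by
  -- helper: negative-intensity fact
  have hneg : ∀ (co : ℝ), co < 0 → co * m + lam ≤ 0 → ∀ y : ℕ, (m:ℝ) ≤ y → co * y + lam ≤ 0 := by
    intro co hco hcom y hy
    nlinarith
  rcases Nat.eq_zero_or_pos n with hn0 | hnpos
  · -- step from the origin
    subst hn0
    have hx0 : x = (0,0,0) := by simpa [Cset] using hx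
    subst hx0
    have hq : q c lam m 1 = poissonPMF lam m := by simp [q]
    have hmem : ((m,0,0) : ℕ × ℕ × ℕ) ∈ Cset c lam m 1 := by
      simp [Cset, W, Lb, Ub]
    have hs3 : s3 a b c lam (0,0,0) = lam := by
      unfold s3
      norm_num
      exact hlam.le
    have hval : hawkes3P a b c lam (0,0,0) (m,0,0) = poissonPMF lam m := by
      unfold hawkes3P
      rw [if_pos ⟨rfl, rfl⟩, hs3]
    calc ENNReal.ofReal (q c lam m 1)
        = ENNReal.ofReal (hawkes3P a b c lam (0,0,0) (m,0,0)) := by rw [hq, hval]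
      _ ≤ _ := ENNReal.le_tsum (⟨(m,0,0), hmem⟩ : (Cset c lam m 1))
  · obtain ⟨n', rfl⟩ : ∃ n', n = n' + 1 := ⟨n - 1, by omega⟩
    have h3 : n' % 3 = 0 ∨ n' % 3 = 1 ∨ n' % 3 = 2 := by omega
    rcases h3 with h3 | h3 | h3
    · -- x = (y, 0, 0), go to (0, y, 0) with probability 1
      rw [Cset, if_neg (by omega)] at hx
      rw [if_pos (by omega)] at hx
      obtain ⟨hx1, hx2, hx3⟩ := hx
      set k := (n' + 1 - 1) / 3 with hk
      have hq : q c lam m (n' + 2) = 1 := by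
        rw [q, if_neg (by omega), if_neg (by omega)]
      have hmem : ((0, x.1, 0) : ℕ × ℕ × ℕ) ∈ Cset c lam m (n' + 2) := by
        rw [Cset, if_neg (by omega), if_neg (by omega), if_pos (by omega)]
        refine ⟨rfl, ?_, rfl⟩
        have : (n' + 2 - 1) / 3 = k := by omega
        rw [this]
        exact hx1
      have hsz : s3 a b c lam x = 0 := by
        unfold s3
        rw [hx2, hx3]
        push_cast
        rw [max_eq_right]
        have hym : (m:ℝ) ≤ x.1 := le_trans (Lb_ge_m hc hlam k) hx1.1
        have := hneg a ha' hma x.1 hym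
        linarith
      have hval : hawkes3P a b c lam x (0, x.1, 0) = 1 := by
        unfold hawkes3P
        rw [if_pos ⟨rfl, by rw [hx2]⟩, hsz]
        exact pmf_zero_zero
      calc ENNReal.ofReal (q c lam m (n'+2))
          = ENNReal.ofReal (hawkes3P a b c lam x (0, x.1, 0)) := by rw [hq, hval]
        _ ≤ _ := ENNReal.le_tsum (⟨(0, x.1, 0), hmem⟩ : (Cset c lam m (n'+2)))
    · -- x = (0, y, 0), go to (0, 0, y) with probability 1
      rw [Cset, if_neg (by omega), if_neg (by omega), if_pos (by omega)] at hx
      obtain ⟨hx1, hx2, hx3⟩ := hx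
      set k := (n' + 1 - 1) / 3 with hk
      have hq : q c lam m (n' + 2) = 1 := by
        rw [q, if_neg (by omega), if_neg (by omega)]
      have hmem : ((0, 0, x.2.1) : ℕ × ℕ × ℕ) ∈ Cset c lam m (n' + 2) := by
        rw [Cset, if_neg (by omega), if_neg (by omega), if_neg (by omega)]
        refine ⟨rfl, rfl, ?_⟩
        have : (n' + 2 - 1) / 3 = k := by omega
        rw [this]
        exact hx2
      have hsz : s3 a b c lam x = 0 := by
        unfold s3
        rw [hx1, hx3]
        push_cast
        rw [max_eq_right]
        have hym : (m:ℝ) ≤ x.2.1 := le_trans (Lb_ge_m hc hlam k) hx2.1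
        have := hneg b hb' hmb x.2.1 hym
        linarith
      have hval : hawkes3P a b c lam x (0, 0, x.2.1) = 1 := by
        unfold hawkes3P
        rw [if_pos ⟨by rw [hx1], rfl⟩, hsz]
        exact pmf_zero_zero
      calc ENNReal.ofReal (q c lam m (n'+2))
          = ENNReal.ofReal (hawkes3P a b c lam x (0, 0, x.2.1)) := by rw [hq, hval]
        _ ≤ _ := ENNReal.le_tsum (⟨(0, 0, x.2.1), hmem⟩ : (Cset c lam m (n'+2)))
    · -- x = (0, 0, y), window step
      rw [Cset, if_neg (by omega), if_neg (by omega), if_neg (by omega)] at hx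
      obtain ⟨hx1, hx2, hx3⟩ := hx
      set k := (n' + 1 - 1) / 3 with hk
      set y := x.2.2 with hy
      have hcpos : (0:ℝ) < c := by linarith
      have hLpos := Lb_pos (lam := lam) (m := m) hc hlam hm k
      have hs : (0:ℝ) < c * y + lam := by
        have := hx3.1
        nlinarith
      have hq : q c lam m (n' + 2) = 1 - err c lam m k := by
        rw [q, if_neg (by omega), if_pos (by omega)]
        have heq4 : (n' + 2 - 4) / 3 = k := by omega
        rw [heq4]
      have hCeq : Cset c lam m (n' + 2)
          = {p : ℕ × ℕ × ℕ | p.1 ∈ W c lam m (k+1) ∧ p.2.1 = 0 ∧ p.2.2 = 0} := by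
        rw [Cset, if_neg (by omega), if_pos (by omega)]
        have : (n' + 2 - 1) / 3 = k + 1 := by omega
        rw [this]
      have hsz : s3 a b c lam x = c * y + lam := by
        unfold s3
        rw [hx1, hx2, ← hy]
        push_cast
        rw [max_eq_left (by linarith)]
        ring_nf
      -- the equivalence between the window and the target set
      let e : (W c lam m (k+1)) ≃ (Cset c lam m (n'+2)) :=
        { toFun := fun ℓ => ⟨((ℓ:ℕ), 0, 0), by rw [hCeq]; exact ⟨ℓ.2, rfl, rfl⟩⟩
          invFun := fun p => ⟨p.1.1, ((Set.ext_iff.mp hCeq p.1).mp p.2).1⟩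
          left_inv := fun ℓ => rfl
          right_inv := fun p => by
            obtain ⟨h1, h2, h3'⟩ := (Set.ext_iff.mp hCeq p.1).mp p.2
            apply Subtype.ext
            show ((p.1.1, 0, 0) : ℕ × ℕ × ℕ) = p.1
            rw [Prod.ext_iff, Prod.ext_iff]
            exact ⟨rfl, h2.symm, h3'.symm⟩ }
      rw [← Equiv.tsum_eq e]
      have hval : ∀ ℓ : (W c lam m (k+1)),
          hawkes3P a b c lam x ((e ℓ) : ℕ × ℕ × ℕ) = poissonPMF (c * y + lam) ℓ := by
        intro ℓ
        show hawkes3P a b c lam x ((ℓ:ℕ), 0, 0) = poissonPMF (c * (y:ℝ) + lam) (ℓ:ℕ)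
        unfold hawkes3P
        rw [if_pos ⟨by rw [hx1], by rw [hx2]⟩, hsz]
      calc ENNReal.ofReal (q c lam m (n'+2))
          = ENNReal.ofReal (1 - err c lam m k) := by rw [hq]
        _ ≤ ENNReal.ofReal (∑' ℓ : (W c lam m (k+1)), poissonPMF (c * y + lam) (ℓ:ℕ)) :=
            ENNReal.ofReal_le_ofReal (window_step hc hlam hm k y ⟨hx3.1, hx3.2⟩)
        _ = ∑' ℓ : (W c lam m (k+1)), ENNReal.ofReal (poissonPMF (c * y + lam) (ℓ:ℕ)) :=
            ENNReal.ofReal_tsum_of_nonneg (fun ℓ => pmf_nonneg hs.le _)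
              ((summable_pmf (c * y + lam)).subtype _)
        _ = _ := by
            apply tsum_congr
            intro ℓ
            rw [hval ℓ]

end facts


def extSeq (N : ℕ) (v : Fin (N+1) → ℕ × ℕ × ℕ) : ℕ → ℕ × ℕ × ℕ :=
  fun i => if h : i < N + 1 then v ⟨i, h⟩ else (0,0,0)

def cylSet (N : ℕ) (v : Fin (N+1) → ℕ × ℕ × ℕ) : Set (ℕ → ℕ × ℕ × ℕ) :=
  {ω | ∀ i ≤ N, ω i = extSeq N v i}

def IType (C : ℕ → Set (ℕ × ℕ × ℕ)) (N : ℕ) :=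
  {v : Fin (N+1) → ℕ × ℕ × ℕ // ∀ i : Fin (N+1), v i ∈ C i.1}

instance (C : ℕ → Set (ℕ × ℕ × ℕ)) (N : ℕ) : Countable (IType C N) := by
  unfold IType; infer_instance

lemma extSeq_lt (N : ℕ) (v : Fin (N+1) → ℕ × ℕ × ℕ) (i : ℕ) (h : i < N+1) :
    extSeq N v i = v ⟨i, h⟩ := dif_pos h

lemma extSeq_snoc_lt (N : ℕ) (v : Fin (N+1) → ℕ × ℕ × ℕ) (y : ℕ × ℕ × ℕ) (i : ℕ)
    (h : i < N+1) : extSeq (N+1) (Fin.snoc v y) i = v ⟨i, h⟩ := by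
  have h2 : i < N+2 := by omega
  rw [extSeq_lt (N+1) _ i h2]
  have heq : (⟨i, h2⟩ : Fin (N+2)) = Fin.castSucc ⟨i, h⟩ := rfl
  rw [heq, Fin.snoc_castSucc]

lemma extSeq_snoc_last (N : ℕ) (v : Fin (N+1) → ℕ × ℕ × ℕ) (y : ℕ × ℕ × ℕ) :
    extSeq (N+1) (Fin.snoc v y) (N+1) = y := by
  rw [extSeq_lt (N+1) _ (N+1) (by omega)]
  have heq : (⟨N+1, by omega⟩ : Fin (N+2)) = Fin.last (N+1) := rfl
  rw [heq, Fin.snoc_last]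

lemma cylSet_measurable (N : ℕ) (v : Fin (N+1) → ℕ × ℕ × ℕ) :
    MeasurableSet (cylSet N v) := by
  have heq : cylSet N v = ⋂ (i : ℕ), ⋂ (_ : i ≤ N), (fun ω : ℕ → ℕ × ℕ × ℕ => ω i) ⁻¹' {extSeq N v i} := by
    ext ω; simp [cylSet, Set.mem_iInter]
  rw [heq]
  exact MeasurableSet.iInter fun i => MeasurableSet.iInter fun _ =>
    measurable_pi_apply i (measurableSet_singleton _)

lemma decomp (μ0 : Measure (ℕ → ℕ × ℕ × ℕ)) (C : ℕ → Set (ℕ × ℕ × ℕ)) (N : ℕ) :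
    μ0 {ω | ∀ i ≤ N, ω i ∈ C i}
      = ∑' v : IType C N, μ0 (cylSet N v.1) := by
  have hset : {ω : ℕ → ℕ × ℕ × ℕ | ∀ i ≤ N, ω i ∈ C i} = ⋃ v : IType C N, cylSet N v.1 := by
    ext ω
    constructor
    · intro hω
      refine Set.mem_iUnion.mpr ⟨⟨fun i => ω i.1, fun i => hω i.1 (Nat.lt_succ_iff.mp i.isLt)⟩, ?_⟩
      intro i hi
      rw [extSeq_lt N _ i (Nat.lt_succ_iff.mpr hi)]
    · intro hω
      obtain ⟨v, hv⟩ := Set.mem_iUnion.mp hω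
      intro i hi
      have h1 : ω i = extSeq N v.1 i := hv i hi
      rw [h1, extSeq_lt N _ i (Nat.lt_succ_iff.mpr hi)]
      exact v.2 ⟨i, Nat.lt_succ_iff.mpr hi⟩
  have hdisj : Pairwise (Function.onFun Disjoint fun v : IType C N => cylSet N v.1) := by
    intro v w hvw
    rw [Function.onFun, Set.disjoint_left]
    intro ω h1 h2
    apply hvw
    apply Subtype.ext
    funext i
    have e1 := h1 i.1 (Nat.lt_succ_iff.mp i.isLt)
    have e2 := h2 i.1 (Nat.lt_succ_iff.mp i.isLt)
    rw [extSeq_lt N _ i.1 i.isLt] at e1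
    rw [extSeq_lt N _ i.1 i.isLt] at e2
    have := e1.symm.trans e2
    simpa using this
  rw [hset, measure_iUnion hdisj (fun v => cylSet_measurable N v.1)]

def snocEquiv (C : ℕ → Set (ℕ × ℕ × ℕ)) (N : ℕ) :
    (IType C N × (C (N+1))) ≃ IType C (N+1) where
  toFun p := ⟨Fin.snoc p.1.1 p.2.1, by
    intro i
    refine Fin.lastCases ?_ ?_ i
    · rw [Fin.snoc_last]; exact p.2.2
    · intro j
      rw [Fin.snoc_castSucc]
      exact p.1.2 j⟩
  invFun v := (⟨Fin.init v.1, fun i => v.2 i.castSucc⟩, ⟨v.1 (Fin.last (N+1)), v.2 (Fin.last (N+1))⟩)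
  left_inv p := by
    obtain ⟨⟨v, hv⟩, ⟨y, hy⟩⟩ := p
    simp only [Prod.mk.injEq]
    simp
  right_inv v := Subtype.ext (Fin.snoc_init_self v.1)

lemma wprod_snoc (P : (ℕ×ℕ×ℕ) → (ℕ×ℕ×ℕ) → ℝ) (N : ℕ) (v : Fin (N+1) → ℕ×ℕ×ℕ) (y : ℕ×ℕ×ℕ) :
    (∏ i ∈ Finset.range (N+1),
        P (extSeq (N+1) (Fin.snoc v y) i) (extSeq (N+1) (Fin.snoc v y) (i+1)))
      = (∏ i ∈ Finset.range N, P (extSeq N v i) (extSeq N v (i+1)))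
          * P (v ⟨N, N.lt_succ_self⟩) y := by
  rw [Finset.prod_range_succ]
  congr 1
  · apply Finset.prod_congr rfl
    intro i hi
    have hi' := Finset.mem_range.mp hi
    rw [extSeq_snoc_lt N v y i (by omega), extSeq_snoc_lt N v y (i+1) (by omega),
      extSeq_lt N v i (by omega), extSeq_lt N v (i+1) (by omega)]
  · rw [extSeq_snoc_lt N v y N (by omega), extSeq_snoc_last N v y]

/-- The master induction lemma: lower bound on the probability of staying in the tube. -/
lemma key_lower (a b c lam : ℝ)
    (μ : ℕ × ℕ × ℕ → Measure (ℕ → ℕ × ℕ × ℕ))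
    (hprob : ∀ x, IsProbabilityMeasure (μ x))
    (hcyl : ∀ (x : ℕ × ℕ × ℕ) (n : ℕ) (s : ℕ → ℕ × ℕ × ℕ),
      (μ x {ω | ∀ i ≤ n, ω i = s i}).toReal
        = (if s 0 = x then 1 else 0)
            * ∏ i ∈ Finset.range n, hawkes3P a b c lam (s i) (s (i + 1)))
    (hPnn : ∀ x y, 0 ≤ hawkes3P a b c lam x y)
    (C : ℕ → Set (ℕ × ℕ × ℕ)) (hC0 : C 0 = {((0,0,0) : ℕ×ℕ×ℕ)})
    (Q : ℕ → ENNReal)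
    (hstep : ∀ n x, x ∈ C n →
      Q (n+1) ≤ ∑' y : (C (n+1)), ENNReal.ofReal (hawkes3P a b c lam x y)) :
    ∀ N, (∏ n ∈ Finset.range N, Q (n+1)) ≤ μ (0,0,0) {ω | ∀ i ≤ N, ω i ∈ C i} := by
  haveI := hprob (0,0,0)
  set P := hawkes3P a b c lam with hP
  -- value of a cylinder
  have hval : ∀ N (v : IType C N), μ (0,0,0) (cylSet N v.1)
      = ENNReal.ofReal (∏ i ∈ Finset.range N, P (extSeq N v.1 i) (extSeq N v.1 (i+1))) := by
    intro N v
    have h1 := hcyl (0,0,0) N (extSeq N v.1)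
    have h0 : extSeq N v.1 0 = (0,0,0) := by
      rw [extSeq_lt N _ 0 (by omega)]
      have := v.2 ⟨0, by omega⟩
      rw [hC0] at this
      simpa using this
    rw [h0, if_pos rfl, one_mul] at h1
    have : cylSet N v.1 = {ω | ∀ i ≤ N, ω i = extSeq N v.1 i} := rfl
    rw [this, ← h1, ENNReal.ofReal_toReal (measure_ne_top _ _)]
  intro N
  induction N with
  | zero =>
    simp only [Finset.range_zero, Finset.prod_empty]
    have hseteq : {ω : ℕ → ℕ × ℕ × ℕ | ∀ i ≤ 0, ω i ∈ C i}
        = {ω : ℕ → ℕ × ℕ × ℕ | ∀ i ≤ 0, ω i = (fun _ => ((0,0,0) : ℕ×ℕ×ℕ)) i} := by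
      ext ω
      simp only [Set.mem_setOf_eq, Nat.le_zero]
      constructor
      · intro h i hi; subst hi
        have := h 0 rfl
        rw [hC0] at this
        simpa using this
      · intro h i hi; subst hi
        rw [h 0 rfl, hC0]
        rfl
    have h1 := hcyl (0,0,0) 0 (fun _ => (0,0,0))
    rw [if_pos rfl, one_mul, Finset.range_zero, Finset.prod_empty] at h1
    rw [hseteq]
    have h2 : μ (0,0,0) {ω : ℕ → ℕ × ℕ × ℕ | ∀ i ≤ 0, ω i = (fun _ => ((0,0,0) : ℕ×ℕ×ℕ)) i}
        = 1 := by
      rw [← ENNReal.ofReal_toReal (measure_ne_top (μ (0,0,0)) _), h1]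
      simp
    rw [h2]
  | succ N ih =>
    rw [decomp (μ (0,0,0)) C (N+1)]
    rw [← Equiv.tsum_eq (snocEquiv C N)]
    have hterm : ∀ p : IType C N × (C (N+1)),
        μ (0,0,0) (cylSet (N+1) ((snocEquiv C N) p).1)
          = ENNReal.ofReal (∏ i ∈ Finset.range N, P (extSeq N p.1.1 i) (extSeq N p.1.1 (i+1)))
              * ENNReal.ofReal (P (p.1.1 ⟨N, N.lt_succ_self⟩) p.2.1) := by
      intro p
      rw [hval (N+1) _]
      have hsnoc : (((snocEquiv C N) p).1 : Fin (N+2) → ℕ×ℕ×ℕ) = Fin.snoc p.1.1 p.2.1 := rfl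
      rw [hsnoc, wprod_snoc P N p.1.1 p.2.1]
      rw [ENNReal.ofReal_mul (Finset.prod_nonneg (fun i _ => hPnn _ _))]
    calc (∏ n ∈ Finset.range (N+1), Q (n+1))
        = (∏ n ∈ Finset.range N, Q (n+1)) * Q (N+1) := Finset.prod_range_succ _ _
      _ ≤ μ (0,0,0) {ω | ∀ i ≤ N, ω i ∈ C i} * Q (N+1) := mul_le_mul_left ih _
      _ = (∑' v : IType C N, μ (0,0,0) (cylSet N v.1)) * Q (N+1) := by
          rw [decomp (μ (0,0,0)) C N]
      _ = ∑' v : IType C N, μ (0,0,0) (cylSet N v.1) * Q (N+1) := by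
          rw [ENNReal.tsum_mul_right]
      _ ≤ ∑' v : IType C N,
            μ (0,0,0) (cylSet N v.1)
              * ∑' y : (C (N+1)), ENNReal.ofReal (P (v.1 ⟨N, N.lt_succ_self⟩) y) := by
          apply ENNReal.tsum_le_tsum
          intro v
          apply mul_le_mul_right
          exact hstep N (v.1 ⟨N, N.lt_succ_self⟩) (v.2 ⟨N, N.lt_succ_self⟩)
      _ = ∑' p : IType C N × (C (N+1)), μ (0,0,0) (cylSet (N+1) ((snocEquiv C N) p).1) := by
          rw [ENNReal.tsum_prod']
          apply tsum_congr
          intro v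
          rw [hval N v, ← ENNReal.tsum_mul_left]
          apply tsum_congr
          intro y
          rw [hterm (v, y)]



section facts2
variable {a b c lam : ℝ} {m : ℕ}

lemma zero_not_mem_W (hc : 1 < c) (hlam : 0 < lam) (hm : 1 ≤ (m:ℝ)) (k : ℕ) :
    (0:ℕ) ∉ W c lam m k := by
  intro h
  have h1 := h.1
  have h2 := Lb_pos (lam := lam) (m := m) hc hlam hm k
  rw [Nat.cast_zero] at h1
  linarith

lemma dd_nonneg (hc : 1 < c) (hlam : 0 < lam) (hm : 1 ≤ (m:ℝ)) (j : ℕ) :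
    0 ≤ dd c lam m j := by
  rw [dd]; split
  · exact err_nonneg hc hlam hm
  · exact le_rfl

lemma dd_le_half (herr : ∀ k, err c lam m k ≤ 1/2) (j : ℕ) : dd c lam m j ≤ 1/2 := by
  rw [dd]; split
  · exact herr _
  · norm_num

lemma q_nonneg (hc : 1 < c) (hlam : 0 < lam) (hm : 1 ≤ (m:ℝ))
    (herr : ∀ k, err c lam m k ≤ 1/2) (j : ℕ) : 0 ≤ q c lam m j := by
  rw [q]; split
  · exact pmf_nonneg hlam.le m
  · split
    · have := herr ((j-4)/3); linarith
    · norm_num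

lemma q_le_one (hc : 1 < c) (hlam : 0 < lam) (hm : 1 ≤ (m:ℝ)) (j : ℕ) :
    q c lam m j ≤ 1 := by
  rw [q]; split
  · exact pmf_le_one hlam.le m
  · split
    · have := err_nonneg (lam := lam) (m := m) (k := (j-4)/3) hc hlam hm; linarith
    · exact le_rfl

lemma q_eq_one_sub_dd (j : ℕ) (hj : 2 ≤ j) : q c lam m j = 1 - dd c lam m j := by
  rw [q, dd, if_neg (by omega)]
  split
  · rfl
  · ring

lemma sum_dd_eq : ∀ N, ∑ n ∈ Finset.range N, dd c lam m (n+1)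
    = ∑ k ∈ Finset.range ((N-1)/3), err c lam m k := by
  intro N
  induction N with
  | zero => simp
  | succ N ih =>
    rw [Finset.sum_range_succ, ih]
    by_cases hN : N % 3 = 0 ∧ 3 ≤ N
    · have h1 : (N+1-1)/3 = (N-1)/3 + 1 := by omega
      have h2 : (N+1-4)/3 = (N-1)/3 := by omega
      rw [dd, if_pos (by omega), h1, Finset.sum_range_succ, h2]
    · have h1 : (N+1-1)/3 = (N-1)/3 := by omega
      rw [dd, if_neg (by omega), h1, add_zero]

lemma prod_q_ge (hc : 1 < c) (hlam : 0 < lam) (hm : 1 ≤ (m:ℝ))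
    (herr : ∀ k, err c lam m k ≤ 1/2) :
    ∀ N, poissonPMF lam m * (1 - ∑ n ∈ Finset.range N, dd c lam m (n+1))
      ≤ ∏ n ∈ Finset.range N, q c lam m (n+1) := by
  have hpm0 : 0 ≤ poissonPMF lam m := pmf_nonneg hlam.le m
  have hpm1 : poissonPMF lam m ≤ 1 := pmf_le_one hlam.le m
  have hddn : ∀ j, 0 ≤ dd c lam m j := dd_nonneg hc hlam hm
  have hdd1 : ∀ j, dd c lam m j ≤ 1 := fun j => le_trans (dd_le_half herr j) (by norm_num)
  have hq0 : ∀ j, 0 ≤ q c lam m j := q_nonneg hc hlam hm herr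
  intro N
  induction N with
  | zero => simpa using hpm1
  | succ N ih =>
    rw [Finset.prod_range_succ, Finset.sum_range_succ]
    rcases Nat.eq_zero_or_pos N with rfl | hN
    · simp only [Finset.range_zero, Finset.prod_empty, Finset.sum_empty, one_mul]
      have hd1 : dd c lam m 1 = 0 := by rw [dd, if_neg (by omega)]
      have hq1 : q c lam m 1 = poissonPMF lam m := by rw [q, if_pos (by omega)]
      rw [hd1, hq1]
      simp
    · have hq : q c lam m (N+1) = 1 - dd c lam m (N+1) := q_eq_one_sub_dd (N+1) (by omega)
      set S := ∑ n ∈ Finset.range N, dd c lam m (n+1) with hS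
      have hS0 : 0 ≤ S := Finset.sum_nonneg (fun i _ => hddn _)
      have hPr0 : 0 ≤ ∏ n ∈ Finset.range N, q c lam m (n+1) :=
        Finset.prod_nonneg (fun i _ => hq0 _)
      rw [hq]
      have hd0 := hddn (N+1)
      have hd1' := hdd1 (N+1)
      rcases le_or_gt (1 - (S + dd c lam m (N+1))) 0 with hneg | hpos
      · have hRHS : 0 ≤ (∏ n ∈ Finset.range N, q c lam m (n+1)) * (1 - dd c lam m (N+1)) :=
          mul_nonneg hPr0 (by linarith)
        nlinarith
      · have hstep1 : poissonPMF lam m * (1 - (S + dd c lam m (N+1)))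
            ≤ (poissonPMF lam m * (1 - S)) * (1 - dd c lam m (N+1)) := by
          nlinarith [mul_nonneg (mul_nonneg hpm0 hS0) hd0]
        have hstep2 : (poissonPMF lam m * (1 - S)) * (1 - dd c lam m (N+1))
            ≤ (∏ n ∈ Finset.range N, q c lam m (n+1)) * (1 - dd c lam m (N+1)) :=
          mul_le_mul_of_nonneg_right ih (by linarith)
        linarith

lemma ofReal_prod_range (f : ℕ → ℝ) (hf : ∀ i, 0 ≤ f i) :
    ∀ N, ENNReal.ofReal (∏ i ∈ Finset.range N, f i)
      = ∏ i ∈ Finset.range N, ENNReal.ofReal (f i) := by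
  intro N
  induction N with
  | zero => simp
  | succ N ih =>
    rw [Finset.prod_range_succ, Finset.prod_range_succ, ← ih,
      ← ENNReal.ofReal_mul (Finset.prod_nonneg (fun i _ => hf i))]

lemma EN_measurable (C : ℕ → Set (ℕ×ℕ×ℕ)) (N : ℕ) :
    MeasurableSet {ω : ℕ → ℕ×ℕ×ℕ | ∀ i ≤ N, ω i ∈ C i} := by
  have heq : {ω : ℕ → ℕ×ℕ×ℕ | ∀ i ≤ N, ω i ∈ C i}
      = ⋂ (i : ℕ), ⋂ (_ : i ≤ N), (fun ω : ℕ → ℕ×ℕ×ℕ => ω i) ⁻¹' (C i) := by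
    ext ω; simp [Set.mem_iInter]
  rw [heq]
  exact MeasurableSet.iInter fun i => MeasurableSet.iInter fun _ =>
    measurable_pi_apply i ((Set.to_countable (C i)).measurableSet)

end facts2
end H3aux

/-- If `a < 0`, `b < 0` and `c > 1`, then the discrete-time Hawkes chain with memory `3`
and parameters `(a,b,c,λ)`, started at `(0,0,0)`, never returns to `(0,0,0)` with positive
probability (hence is transient). Here `μ x` is the trajectory law of the chain started at
`x`, characterized by the cylinder formula (Ionescu-Tulcea construction). -/
theorem hawkes3_transient_case1 (a b c lam : ℝ) (hlam : 0 < lam)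
    (ha : a < 0) (hb : b < 0) (hc : 1 < c)
    (μ : ℕ × ℕ × ℕ → Measure (ℕ → ℕ × ℕ × ℕ))
    (hprob : ∀ x, IsProbabilityMeasure (μ x))
    (hcyl : ∀ (x : ℕ × ℕ × ℕ) (n : ℕ) (s : ℕ → ℕ × ℕ × ℕ),
      (μ x {ω | ∀ i ≤ n, ω i = s i}).toReal
        = (if s 0 = x then 1 else 0)
            * ∏ i ∈ Finset.range n, hawkes3P a b c lam (s i) (s (i + 1))) :
    0 < μ (0, 0, 0) {ω | ∀ n ≥ 1, ω n ≠ (0, 0, 0)} := by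
  classical
  open H3aux in
  have hcpos : (0:ℝ) < c := lt_trans one_pos hc
  have hapos : (0:ℝ) < -a := by linarith
  have hbpos : (0:ℝ) < -b := by linarith
  have hεpos := H3aux.eps_pos hc
  have hx1lt : 2/(c+1) < 1 := by rw [div_lt_one (by linarith)]; linarith
  have hBpos : (0:ℝ) < (1 - 2/(c+1))⁻¹ := by
    apply inv_pos.mpr; linarith
  -- choose `m`
  obtain ⟨m, hmgt⟩ := exists_nat_gt
    (max (max (lam / (-a)) (lam / (-b)))
      (max 1 (2 * (1 - 2/(c+1))⁻¹ / ((H3aux.eps c)^2 * c))))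
  have hm1 : 1 ≤ (m:ℝ) :=
    (lt_of_le_of_lt ((le_max_left 1 _).trans (le_max_right _ _)) hmgt).le
  have hmpos : (0:ℝ) < m := by linarith
  have hma : a * m + lam ≤ 0 := by
    have hA : lam / (-a) < m :=
      lt_of_le_of_lt ((le_max_left _ _).trans (le_max_left _ _)) hmgt
    have h2 : lam < (m:ℝ) * (-a) := (div_lt_iff₀ hapos).mp hA
    nlinarith
  have hmb : b * m + lam ≤ 0 := by
    have hA : lam / (-b) < m :=
      lt_of_le_of_lt ((le_max_right _ _).trans (le_max_left _ _)) hmgt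
    have h2 : lam < (m:ℝ) * (-b) := (div_lt_iff₀ hbpos).mp hA
    nlinarith
  have hhalf : 1 / ((H3aux.eps c)^2 * c * m) * (1 - 2/(c+1))⁻¹ ≤ 1/2 := by
    have hT : 2 * (1 - 2/(c+1))⁻¹ / ((H3aux.eps c)^2 * c) < m :=
      lt_of_le_of_lt ((le_max_right 1 _).trans (le_max_right _ _)) hmgt
    have hApos : (0:ℝ) < (H3aux.eps c)^2 * c := by positivity
    have h2 : 2 * (1 - 2/(c+1))⁻¹ < (m:ℝ) * ((H3aux.eps c)^2 * c) := (div_lt_iff₀ hApos).mp hT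
    have hAm : (0:ℝ) < (H3aux.eps c)^2 * c * m := by positivity
    rw [div_mul_eq_mul_div, one_mul, div_le_div_iff₀ hAm (by norm_num : (0:ℝ) < 2)]
    nlinarith
  -- error terms are uniformly at most 1/2
  have herr : ∀ k, H3aux.err c lam m k ≤ 1/2 := by
    intro k
    have h1 : H3aux.err c lam m k ≤ ∑ j ∈ Finset.range (k+1), H3aux.err c lam m j :=
      Finset.single_le_sum (f := fun j => H3aux.err c lam m j)
        (fun j _ => H3aux.err_nonneg (k := j) hc hlam hm1)
        (Finset.self_mem_range_succ k)
    have h2 := H3aux.sum_err_le (lam := lam) (m := m) hc hlam hm1 (k+1)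
    linarith
  -- the per-step lower bounds
  have hstepQ : ∀ n x, x ∈ H3aux.Cset c lam m n →
      ENNReal.ofReal (H3aux.q c lam m (n+1)) ≤
        ∑' y : (H3aux.Cset c lam m (n+1)), ENNReal.ofReal (hawkes3P a b c lam x y) :=
    H3aux.step_bound hc hlam hm1 ha hb hma hmb
  have hC0 : H3aux.Cset c lam m 0 = {((0,0,0) : ℕ×ℕ×ℕ)} := by simp [H3aux.Cset]
  have hkey := H3aux.key_lower a b c lam μ hprob hcyl
    (fun x y => H3aux.hawkes3P_nonneg ha hb x y) (H3aux.Cset c lam m) hC0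
    (fun j => ENNReal.ofReal (H3aux.q c lam m j)) hstepQ
  set pm := poissonPMF lam m with hpm
  have hpmpos : 0 < pm := H3aux.pmf_pos hlam m
  -- products are at least pm/2
  have hprodq : ∀ N, ENNReal.ofReal (pm/2)
      ≤ ∏ n ∈ Finset.range N, ENNReal.ofReal (H3aux.q c lam m (n+1)) := by
    intro N
    rw [← H3aux.ofReal_prod_range (fun n => H3aux.q c lam m (n+1))
      (fun n => H3aux.q_nonneg hc hlam hm1 herr (n+1)) N]
    apply ENNReal.ofReal_le_ofReal
    have h1 := H3aux.prod_q_ge hc hlam hm1 herr N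
    have h2 : ∑ n ∈ Finset.range N, H3aux.dd c lam m (n+1) ≤ 1/2 := by
      rw [H3aux.sum_dd_eq]
      exact le_trans (H3aux.sum_err_le hc hlam hm1 _) hhalf
    nlinarith
  have hEboundN : ∀ N, ENNReal.ofReal (pm/2)
      ≤ μ (0,0,0) {ω | ∀ i ≤ N, ω i ∈ H3aux.Cset c lam m i} :=
    fun N => le_trans (hprodq N) (hkey N)
  -- pass to the intersection
  haveI := hprob (0,0,0)
  have hanti : Antitone (fun N => {ω : ℕ → ℕ×ℕ×ℕ | ∀ i ≤ N, ω i ∈ H3aux.Cset c lam m i}) := by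
    intro N N' h ω hω i hi
    exact hω i (hi.trans h)
  have hiInf := Directed.measure_iInter (μ := μ (0,0,0))
    (fun N => (H3aux.EN_measurable (H3aux.Cset c lam m) N).nullMeasurableSet)
    hanti.directed_ge ⟨0, measure_ne_top _ _⟩
  have hEbound : ENNReal.ofReal (pm/2)
      ≤ μ (0,0,0) (⋂ N, {ω : ℕ → ℕ×ℕ×ℕ | ∀ i ≤ N, ω i ∈ H3aux.Cset c lam m i}) := by
    rw [hiInf]
    exact le_iInf hEboundN
  -- the intersection avoids the origin forever
  have hsub : (⋂ N, {ω : ℕ → ℕ×ℕ×ℕ | ∀ i ≤ N, ω i ∈ H3aux.Cset c lam m i})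
      ⊆ {ω : ℕ → ℕ×ℕ×ℕ | ∀ n ≥ 1, ω n ≠ (0,0,0)} := by
    intro ω hω n hn hcontra
    have hmem : ω n ∈ H3aux.Cset c lam m n := (Set.mem_iInter.mp hω n) n le_rfl
    obtain ⟨n', rfl⟩ : ∃ n', n = n' + 1 := ⟨n - 1, by omega⟩
    rw [H3aux.Cset, if_neg (by omega)] at hmem
    by_cases h0 : n' % 3 = 0
    · rw [if_pos (by omega)] at hmem
      rw [hcontra] at hmem
      exact H3aux.zero_not_mem_W hc hlam hm1 _ hmem.1
    · by_cases h1 : n' % 3 = 1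
      · rw [if_neg (by omega), if_pos (by omega)] at hmem
        rw [hcontra] at hmem
        exact H3aux.zero_not_mem_W hc hlam hm1 _ hmem.2.1
      · rw [if_neg (by omega), if_neg (by omega)] at hmem
        rw [hcontra] at hmem
        exact H3aux.zero_not_mem_W hc hlam hm1 _ hmem.2.2
  calc (0:ENNReal) < ENNReal.ofReal (pm/2) := ENNReal.ofReal_pos.mpr (by linarith)
    _ ≤ μ (0,0,0) (⋂ N, {ω : ℕ → ℕ×ℕ×ℕ | ∀ i ≤ N, ω i ∈ H3aux.Cset c lam m i}) := hEbound
    _ ≤ μ (0,0,0) {ω : ℕ → ℕ×ℕ×ℕ | ∀ n ≥ 1, ω n ≠ (0,0,0)} := measure_mono hsub
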